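/- The quadratic (in Ω) expression Δ(r₀) - a²sin²θ₀ + Ω(4ar₀ - A₀Ω)sin²θ₀ is strictly positive if and only if Ω ∈ (Ω₋, Ω₊), where Ω± = (a ± √Δ(r₀)/sinθ₀)/(r₀² + a² ± a√Δ(r₀) sinθ₀). -/

import Mathlib

set_option maxHeartbeats 1000000 in
/-- The quadratic (in `Ω`) `Δ - a²sin²θ₀ + Ω(4ar₀ - A₀Ω)sin²θ₀` is strictly positive
iff `Ω ∈ (Ω₋, Ω₊)`. -/
theorem stmt_13 (a r₀ θ₀ : ℝ) (ha0 : 0 < a) (ha1 : a < 1)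
    (hr : 1 + Real.sqrt (1 - a ^ 2) < r₀) (hθ : θ₀ ∈ Set.Ioo 0 Real.pi) :
    let Δ : ℝ := r₀ ^ 2 - 2 * r₀ + a ^ 2
    let A₀ : ℝ := (r₀ ^ 2 + a ^ 2) ^ 2 - a ^ 2 * Δ * Real.sin θ₀ ^ 2
    let Ωm : ℝ := (a - Real.sqrt Δ / Real.sin θ₀) /
      (r₀ ^ 2 + a ^ 2 - a * Real.sqrt Δ * Real.sin θ₀)
    let Ωp : ℝ := (a + Real.sqrt Δ / Real.sin θ₀) /
      (r₀ ^ 2 + a ^ 2 + a * Real.sqrt Δ * Real.sin θ₀)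
    ∀ Ω : ℝ,
      0 < Δ - a ^ 2 * Real.sin θ₀ ^ 2 + Ω * (4 * a * r₀ - A₀ * Ω) * Real.sin θ₀ ^ 2 ↔
        Ω ∈ Set.Ioo Ωm Ωp := by
  intro Δ A₀ Ωm Ωp Ω
  obtain ⟨hθ0, hθπ⟩ := hθ
  set s := Real.sin θ₀ with hsdef
  have hΔe : Δ = r₀ ^ 2 - 2 * r₀ + a ^ 2 := rfl
  have hAe : A₀ = (r₀ ^ 2 + a ^ 2) ^ 2 - a ^ 2 * Δ * s ^ 2 := rfl
  have hme : Ωm = (a - Real.sqrt Δ / s) / (r₀ ^ 2 + a ^ 2 - a * Real.sqrt Δ * s) := rfl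
  have hpe : Ωp = (a + Real.sqrt Δ / s) / (r₀ ^ 2 + a ^ 2 + a * Real.sqrt Δ * s) := rfl
  clear_value Δ A₀ Ωm Ωp
  have hs : 0 < s := Real.sin_pos_of_pos_of_lt_pi hθ0 hθπ
  have hs1 : s ≤ 1 := Real.sin_le_one θ₀
  have ha2 : (0:ℝ) ≤ 1 - a ^ 2 := by nlinarith
  have hsq : Real.sqrt (1 - a ^ 2) ^ 2 = 1 - a ^ 2 := Real.sq_sqrt ha2
  have hsqnn : 0 ≤ Real.sqrt (1 - a ^ 2) := Real.sqrt_nonneg _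
  have hr1 : 1 < r₀ := by linarith
  have hD : 0 < Δ := by
    have h0 : Real.sqrt (1 - a ^ 2) < r₀ - 1 := by linarith
    rw [hΔe]
    nlinarith
  set d := Real.sqrt Δ with hdd
  have hd2 : d ^ 2 = r₀ ^ 2 - 2 * r₀ + a ^ 2 := by rw [hdd, Real.sq_sqrt hD.le, hΔe]
  have hd : 0 < d := Real.sqrt_pos.mpr hD
  have hA : 0 < A₀ := by
    rw [hAe, hΔe]
    have hs2 : s ^ 2 ≤ 1 := by nlinarith
    nlinarith [mul_nonneg (mul_nonneg ha2 hD.le) (sq_nonneg s),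
      mul_nonneg (hD.le) (by nlinarith : (0:ℝ) ≤ 1 - s ^ 2),
      sq_nonneg (r₀ ^ 2 + a ^ 2 - 1)]
  have hdR : d < r₀ ^ 2 + a ^ 2 := by nlinarith
  have hden2 : 0 < r₀ ^ 2 + a ^ 2 + a * d * s := by positivity
  have hden1 : 0 < r₀ ^ 2 + a ^ 2 - a * d * s := by
    nlinarith [mul_nonneg (sub_nonneg.mpr ha1.le) (mul_pos hd hs).le,
      mul_nonneg (sub_nonneg.mpr hs1) hd.le]
  have hs0 : s ≠ 0 := hs.ne'
  have hden1' : r₀ ^ 2 + a ^ 2 - a * d * s ≠ 0 := hden1.ne'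
  have hden2' : r₀ ^ 2 + a ^ 2 + a * d * s ≠ 0 := hden2.ne'
  -- numerators of Ωp - Ω and Ω - Ωm
  set N1 : ℝ := a * s + d - s * (r₀ ^ 2 + a ^ 2 + a * d * s) * Ω with hN1
  set N2 : ℝ := s * (r₀ ^ 2 + a ^ 2 - a * d * s) * Ω - (a * s - d) with hN2
  have key : Δ - a ^ 2 * s ^ 2 + Ω * (4 * a * r₀ - A₀ * Ω) * s ^ 2 = N1 * N2 := by
    rw [hΔe, hAe, hΔe, hN1, hN2]
    linear_combination (-(1 - a * s ^ 2 * Ω) ^ 2) * hd2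
  have e1 : N1 = s * (r₀ ^ 2 + a ^ 2 + a * d * s) * (Ωp - Ω) := by
    rw [hN1, hpe]; field_simp
  have e2 : N2 = s * (r₀ ^ 2 + a ^ 2 - a * d * s) * (Ω - Ωm) := by
    rw [hN2, hme]
    have h3 : (a - d / s) / (r₀ ^ 2 + a ^ 2 - a * d * s) * (r₀ ^ 2 + a ^ 2 - a * d * s) = a - d / s :=
      div_mul_cancel₀ _ hden1'
    have h4 : s * (d / s) = d := mul_div_cancel₀ d hs0
    linear_combination s * h3 - h4
  have hΩlt : Ωm < Ωp := by
    have hdiff : Ωp - Ωm = 2 * d * (r₀ ^ 2 + a ^ 2 - a ^ 2 * s ^ 2) /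
        (s * ((r₀ ^ 2 + a ^ 2 - a * d * s) * (r₀ ^ 2 + a ^ 2 + a * d * s))) := by
      rw [hpe, hme]; field_simp; ring
    have hs2 : s ^ 2 ≤ 1 := Real.sin_sq_le_one θ₀
    have hnum : 0 < r₀ ^ 2 + a ^ 2 - a ^ 2 * s ^ 2 := by
      have h1 : a ^ 2 * s ^ 2 ≤ a ^ 2 * 1 := mul_le_mul_of_nonneg_left hs2 (sq_nonneg a)
      have h2 : 0 < r₀ ^ 2 := by positivity
      linarith
    have : 0 < Ωp - Ωm := by rw [hdiff]; positivity
    linarith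
  rw [key, e1, e2]
  have c1 : 0 < s * (r₀ ^ 2 + a ^ 2 + a * d * s) := by positivity
  have c2 : 0 < s * (r₀ ^ 2 + a ^ 2 - a * d * s) := by positivity
  constructor
  · intro h
    rcases mul_pos_iff.mp h with ⟨h1, h2⟩ | ⟨h1, h2⟩
    · have h1' : 0 < Ωp - Ω := by
        by_contra hc; push_neg at hc
        nlinarith [mul_nonneg c1.le (neg_nonneg.mpr hc)]
      have h2' : 0 < Ω - Ωm := by
        by_contra hc; push_neg at hc
        nlinarith [mul_nonneg c2.le (neg_nonneg.mpr hc)]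
      exact ⟨by linarith, by linarith⟩
    · exfalso
      have h1' : Ωp - Ω < 0 := by
        by_contra hc; push_neg at hc
        nlinarith [mul_nonneg c1.le hc]
      have h2' : Ω - Ωm < 0 := by
        by_contra hc; push_neg at hc
        nlinarith [mul_nonneg c2.le hc]
      linarith
  · rintro ⟨h1, h2⟩
    exact mul_pos (mul_pos c1 (by linarith)) (mul_pos c2 (by linarith))
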